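/- If G is a planar graph, then the graph F(G) contains no clique on 4 vertices, i.e., ω(F(G)) ≤ 3. -/

import Mathlib

open SimpleGraph

variable {V : Type*}

/-- Four distinct vertices forming a 4-cycle in `G`. -/
def IsC4 (G : SimpleGraph V) (a b c d : V) : Prop :=
  a ≠ b ∧ a ≠ c ∧ a ≠ d ∧ b ≠ c ∧ b ≠ d ∧ c ≠ d ∧
    G.Adj a b ∧ G.Adj b c ∧ G.Adj c d ∧ G.Adj d a

/-- A proper edge coloring of `G` in which every 4-cycle is rainbow. -/
def IsBColoring (G : SimpleGraph V) {α : Type*} (C : Sym2 V → α) : Prop :=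
  (∀ a b c : V, G.Adj a b → G.Adj a c → b ≠ c → C s(a, b) ≠ C s(a, c)) ∧
  (∀ a b c d : V, IsC4 G a b c d →
    C s(a, b) ≠ C s(b, c) ∧ C s(a, b) ≠ C s(c, d) ∧ C s(a, b) ≠ C s(d, a) ∧
    C s(b, c) ≠ C s(c, d) ∧ C s(b, c) ≠ C s(d, a) ∧ C s(c, d) ≠ C s(d, a))

/-- The minimum number of colors in a B-coloring of `G`. -/
noncomputable def qB (G : SimpleGraph V) : ℕ :=
  sInf {n | ∃ C : Sym2 V → Fin n, IsBColoring G C}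

/-- `e` and `f` are opposite edges of some 4-cycle of `G`. -/
def OppC4 (G : SimpleGraph V) (e f : Sym2 V) : Prop :=
  ∃ a b c d : V, IsC4 G a b c d ∧ e = s(a, b) ∧ f = s(c, d)

/-- Two edges (as unordered pairs) share no vertex. -/
def EdgeDisjoint (e f : Sym2 V) : Prop := ∀ v : V, v ∈ e → v ∉ f

/-- The graph `F(G)` on the edges of `G`: two vertex-disjoint edges are adjacent
iff they are opposite edges of a 4-cycle of `G`. -/
def Fgraph (G : SimpleGraph V) : SimpleGraph G.edgeSet :=
  SimpleGraph.fromRel fun e f =>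
    EdgeDisjoint (e : Sym2 V) (f : Sym2 V) ∧ OppC4 G (e : Sym2 V) (f : Sym2 V)

/-- The extended line graph `L⁺(G)`: edges of `G` are adjacent if they share an
endpoint or are opposite edges of a 4-cycle of `G`. -/
def Lplus (G : SimpleGraph V) : SimpleGraph G.edgeSet :=
  SimpleGraph.fromRel fun e f =>
    (∃ v : V, v ∈ (e : Sym2 V) ∧ v ∈ (f : Sym2 V)) ∨ OppC4 G (e : Sym2 V) (f : Sym2 V)

/-- `H` is a minor of `G`, via branch sets. -/
def HasMinor {W : Type*} (G : SimpleGraph V) (H : SimpleGraph W) : Prop :=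
  ∃ B : W → Set V,
    (∀ w, (G.induce (B w)).Connected) ∧
    (∀ w₁ w₂, w₁ ≠ w₂ → Disjoint (B w₁) (B w₂)) ∧
    (∀ w₁ w₂, H.Adj w₁ w₂ → ∃ v₁ ∈ B w₁, ∃ v₂ ∈ B w₂, G.Adj v₁ v₂)

/-- Planarity via Wagner's theorem: no `K₅` minor and no `K₃,₃` minor. -/
def IsPlanar (G : SimpleGraph V) : Prop :=
  ¬ HasMinor G (completeGraph (Fin 5)) ∧
    ¬ HasMinor G (completeBipartiteGraph (Fin 3) (Fin 3))

/-- Outerplanarity: no `K₄` minor and no `K₂,₃` minor. -/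
def IsOuterplanar (G : SimpleGraph V) : Prop :=
  ¬ HasMinor G (completeGraph (Fin 4)) ∧
    ¬ HasMinor G (completeBipartiteGraph (Fin 2) (Fin 3))

/-- `G` is 2-connected: at least 3 vertices and removing any vertex leaves it connected. -/
def IsTwoConnected (G : SimpleGraph V) : Prop :=
  3 ≤ Nat.card V ∧ ∀ v : V, (G.induce {u | u ≠ v}).Connected

/-- `K₄` minus one edge, on `Fin 4` (the edge between `2` and `3` removed). -/
def K4e : SimpleGraph (Fin 4) :=
  SimpleGraph.fromRel fun x y => s(x, y) ≠ s((2 : Fin 4), (3 : Fin 4))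

/-- The chromatic index: minimum number of colors in a proper edge coloring. -/
noncomputable def chromIndex (G : SimpleGraph V) : ℕ :=
  sInf {n | ∃ C : Sym2 V → Fin n,
    ∀ a b c : V, G.Adj a b → G.Adj a c → b ≠ c → C s(a, b) ≠ C s(a, c)}

/-- `K₆` minus a perfect matching, on `Fin 6` (the matching `01, 23, 45` removed). -/
def K6mM : SimpleGraph (Fin 6) :=
  SimpleGraph.fromRel fun x y => (x : ℕ) / 2 ≠ (y : ℕ) / 2

/-- A path `v₀v₁v₂v₃` together with a vertex `4` adjacent to all four path vertices. -/
def FanGraph : SimpleGraph (Fin 5) :=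
  SimpleGraph.fromRel fun x y =>
    ((x : ℕ) + 1 = (y : ℕ) ∧ (y : ℕ) ≤ 3) ∨ (x : ℕ) = 4


lemma OppC4.symm' {G : SimpleGraph V} {e f : Sym2 V} (h : OppC4 G e f) : OppC4 G f e := by
  obtain ⟨a, b, c, d, ⟨hab, hac, had, hbc, hbd, hcd, h1, h2, h3, h4⟩, he, hf⟩ := h
  exact ⟨c, d, a, b, ⟨hcd, hac.symm, hbc.symm, had.symm, hbd.symm, hab,
    h3, h4, h1, h2⟩, hf, he⟩

lemma opp_adj {G : SimpleGraph V} {e f : Sym2 V} (h : OppC4 G e f) {u v x y : V}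
    (he : e = s(u, v)) (hf : f = s(x, y)) :
    (G.Adj u x ∧ G.Adj v y) ∨ (G.Adj u y ∧ G.Adj v x) := by
  obtain ⟨a, b, c, d, ⟨-, -, -, -, -, -, -, h2, -, h4⟩, he', hf'⟩ := h
  have had := h4.symm
  have hcb := h2.symm
  rw [he'] at he
  rw [hf'] at hf
  rcases Sym2.eq_iff.mp he.symm with ⟨rfl, rfl⟩ | ⟨rfl, rfl⟩ <;>
    rcases Sym2.eq_iff.mp hf.symm with ⟨rfl, rfl⟩ | ⟨rfl, rfl⟩ <;> tauto

lemma edgeDisjoint_ne {e f : Sym2 V} (h : EdgeDisjoint e f) {u v x y : V}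
    (he : e = s(u, v)) (hf : f = s(x, y)) : u ≠ x ∧ u ≠ y ∧ v ≠ x ∧ v ≠ y := by
  subst he hf
  have h1 := h u (by simp)
  have h2 := h v (by simp)
  simp only [Sym2.mem_iff, not_or] at h1 h2
  tauto

lemma induce_singleton_connected (G : SimpleGraph V) (v : V) :
    (G.induce {v}).Connected := by
  haveI : Nonempty ({v} : Set V) := ⟨⟨v, rfl⟩⟩
  refine ⟨fun a b => ?_⟩
  have : a = b := Subtype.ext (a.2.trans b.2.symm)
  rw [this]

lemma induce_pair_connected {G : SimpleGraph V} {u v : V} (h : G.Adj u v) :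
    (G.induce ({u, v} : Set V)).Connected := by
  have key : ∀ a : ({u, v} : Set V), (G.induce {u, v}).Reachable ⟨u, by simp⟩ a := by
    rintro ⟨a, ha⟩
    rcases ha with rfl | ha
    · rfl
    · rw [Set.mem_singleton_iff] at ha
      subst ha
      exact SimpleGraph.Adj.reachable (by simpa using h)
  haveI : Nonempty ({u, v} : Set V) := ⟨⟨u, by simp⟩⟩
  exact ⟨fun a b => (key a).symm.trans (key b)⟩

lemma EdgeDisjoint.symm' {e f : Sym2 V} (h : EdgeDisjoint e f) : EdgeDisjoint f e :=
  fun v hv hvf => h v hvf hv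

theorem Fgraph_cliqueFree_of_planar' {V : Type*} [Fintype V] (G : SimpleGraph V)
    (hG : ¬ HasMinor G (completeGraph (Fin 5))) : (Fgraph G).CliqueFree 4 := by
  by_contra h
  rw [SimpleGraph.not_cliqueFree_iff] at h
  obtain ⟨f⟩ := h
  have key : ∀ i j : Fin 4, i ≠ j →
      EdgeDisjoint ((f i : G.edgeSet) : Sym2 V) ((f j : G.edgeSet) : Sym2 V) ∧
        OppC4 G ((f i : G.edgeSet) : Sym2 V) ((f j : G.edgeSet) : Sym2 V) := by
    intro i j hij
    have hadj : (Fgraph G).Adj (f i) (f j) := f.toHom.map_adj (by simpa using hij)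
    unfold Fgraph at hadj
    rw [SimpleGraph.fromRel_adj] at hadj
    rcases hadj.2 with ⟨h1, h2⟩ | ⟨h1, h2⟩
    · exact ⟨h1, h2⟩
    · exact ⟨h1.symm', h2.symm'⟩
  have hrep : ∀ i : Fin 4, ∃ u v : V, ((f i : G.edgeSet) : Sym2 V) = s(u, v) ∧ G.Adj u v := by
    intro i
    have hex : ∀ z : Sym2 V, ∃ x y, z = s(x, y) := Sym2.ind fun x y => ⟨x, y, rfl⟩
    obtain ⟨x, y, hxy⟩ := hex ((f i : G.edgeSet) : Sym2 V)
    refine ⟨x, y, hxy, ?_⟩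
    have h2 := (f i : G.edgeSet).2
    rw [hxy] at h2
    exact h2
  obtain ⟨u1, v1, he1, ha1⟩ := hrep 0
  obtain ⟨u2, v2, he2, ha2⟩ := hrep 1
  obtain ⟨u3, v3, he3, ha3⟩ := hrep 2
  obtain ⟨u4, v4, he4, ha4⟩ := hrep 3
  have k01 := key 0 1 (by decide)
  have k02 := key 0 2 (by decide)
  have k03 := key 0 3 (by decide)
  have k12 := key 1 2 (by decide)
  have k13 := key 1 3 (by decide)
  have k23 := key 2 3 (by decide)
  have cr01 := opp_adj k01.2 he1 he2
  have cr02 := opp_adj k02.2 he1 he3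
  have cr03 := opp_adj k03.2 he1 he4
  have cr12 := opp_adj k12.2 he2 he3
  have cr13 := opp_adj k13.2 he2 he4
  have cr23 := opp_adj k23.2 he3 he4
  have nd01 := edgeDisjoint_ne k01.1 he1 he2
  have nd02 := edgeDisjoint_ne k02.1 he1 he3
  have nd03 := edgeDisjoint_ne k03.1 he1 he4
  have nd12 := edgeDisjoint_ne k12.1 he2 he3
  have nd13 := edgeDisjoint_ne k13.1 he2 he4
  have nd23 := edgeDisjoint_ne k23.1 he3 he4
  obtain ⟨n1, n2, n3, n4⟩ := nd01
  obtain ⟨n5, n6, n7, n8⟩ := nd02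
  obtain ⟨n9, n10, n11, n12⟩ := nd03
  obtain ⟨n13, n14, n15, n16⟩ := nd12
  obtain ⟨n17, n18, n19, n20⟩ := nd13
  obtain ⟨n21, n22, n23, n24⟩ := nd23
  have m1 := ha1.ne
  have m2 := ha2.ne
  have m3 := ha3.ne
  have m4 := ha4.ne
  have n1s := Ne.symm n1
  have n2s := Ne.symm n2
  have n3s := Ne.symm n3
  have n4s := Ne.symm n4
  have n5s := Ne.symm n5
  have n6s := Ne.symm n6
  have n7s := Ne.symm n7
  have n8s := Ne.symm n8
  have n9s := Ne.symm n9
  have n10s := Ne.symm n10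
  have n11s := Ne.symm n11
  have n12s := Ne.symm n12
  have n13s := Ne.symm n13
  have n14s := Ne.symm n14
  have n15s := Ne.symm n15
  have n16s := Ne.symm n16
  have n17s := Ne.symm n17
  have n18s := Ne.symm n18
  have n19s := Ne.symm n19
  have n20s := Ne.symm n20
  have n21s := Ne.symm n21
  have n22s := Ne.symm n22
  have n23s := Ne.symm n23
  have n24s := Ne.symm n24
  have m1s := Ne.symm m1
  have m2s := Ne.symm m2
  have m3s := Ne.symm m3
  have m4s := Ne.symm m4
  clear key hrep k01 k02 k03 k12 k13 k23 he1 he2 he3 he4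
  apply hG
  refine ⟨![{u1, v1}, {u2, v2}, {u3}, {v3}, {u4, v4}], ?_, ?_, ?_⟩
  · intro w
    fin_cases w
    · exact induce_pair_connected ha1
    · exact induce_pair_connected ha2
    · exact induce_singleton_connected G u3
    · exact induce_singleton_connected G v3
    · exact induce_pair_connected ha4
  · intro w1 w2 hne
    fin_cases w1 <;> fin_cases w2 <;>
      simp_all [Set.disjoint_left]
  · intro w1 w2 hadj
    have hne : w1 ≠ w2 := hadj.ne
    fin_cases w1 <;> fin_cases w2 <;> simp only [Matrix.cons_val_zero, Matrix.cons_val_one,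
      Matrix.head_cons, Matrix.cons_val_two, Matrix.tail_cons, Matrix.cons_val_three,
      Matrix.cons_val_four, Matrix.cons_val_succ] <;> first
    | exact absurd rfl hne
    | skip
    · rcases cr01 with ⟨h, -⟩ | ⟨h, -⟩
      exacts [⟨u1, by simp, u2, by simp, h⟩, ⟨u1, by simp, v2, by simp, h⟩]
    · rcases cr02 with ⟨h, -⟩ | ⟨-, h⟩
      exacts [⟨u1, by simp, u3, by simp, h⟩, ⟨v1, by simp, u3, by simp, h⟩]
    · rcases cr02 with ⟨-, h⟩ | ⟨h, -⟩
      exacts [⟨v1, by simp, v3, by simp, h⟩, ⟨u1, by simp, v3, by simp, h⟩]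
    · rcases cr03 with ⟨h, -⟩ | ⟨h, -⟩
      exacts [⟨u1, by simp, u4, by simp, h⟩, ⟨u1, by simp, v4, by simp, h⟩]
    · rcases cr01 with ⟨h, -⟩ | ⟨h, -⟩
      exacts [⟨u2, by simp, u1, by simp, h.symm⟩, ⟨v2, by simp, u1, by simp, h.symm⟩]
    · rcases cr12 with ⟨h, -⟩ | ⟨-, h⟩
      exacts [⟨u2, by simp, u3, by simp, h⟩, ⟨v2, by simp, u3, by simp, h⟩]
    · rcases cr12 with ⟨-, h⟩ | ⟨h, -⟩
      exacts [⟨v2, by simp, v3, by simp, h⟩, ⟨u2, by simp, v3, by simp, h⟩]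
    · rcases cr13 with ⟨h, -⟩ | ⟨h, -⟩
      exacts [⟨u2, by simp, u4, by simp, h⟩, ⟨u2, by simp, v4, by simp, h⟩]
    · rcases cr02 with ⟨h, -⟩ | ⟨-, h⟩
      exacts [⟨u3, by simp, u1, by simp, h.symm⟩, ⟨u3, by simp, v1, by simp, h.symm⟩]
    · rcases cr12 with ⟨h, -⟩ | ⟨-, h⟩
      exacts [⟨u3, by simp, u2, by simp, h.symm⟩, ⟨u3, by simp, v2, by simp, h.symm⟩]
    · exact ⟨u3, by simp, v3, by simp, ha3⟩
    · rcases cr23 with ⟨h, -⟩ | ⟨h, -⟩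
      exacts [⟨u3, by simp, u4, by simp, h⟩, ⟨u3, by simp, v4, by simp, h⟩]
    · rcases cr02 with ⟨-, h⟩ | ⟨h, -⟩
      exacts [⟨v3, by simp, v1, by simp, h.symm⟩, ⟨v3, by simp, u1, by simp, h.symm⟩]
    · rcases cr12 with ⟨-, h⟩ | ⟨h, -⟩
      exacts [⟨v3, by simp, v2, by simp, h.symm⟩, ⟨v3, by simp, u2, by simp, h.symm⟩]
    · exact ⟨v3, by simp, u3, by simp, ha3.symm⟩
    · rcases cr23 with ⟨-, h⟩ | ⟨-, h⟩
      exacts [⟨v3, by simp, v4, by simp, h⟩, ⟨v3, by simp, u4, by simp, h⟩]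
    · rcases cr03 with ⟨h, -⟩ | ⟨h, -⟩
      exacts [⟨u4, by simp, u1, by simp, h.symm⟩, ⟨v4, by simp, u1, by simp, h.symm⟩]
    · rcases cr13 with ⟨h, -⟩ | ⟨h, -⟩
      exacts [⟨u4, by simp, u2, by simp, h.symm⟩, ⟨v4, by simp, u2, by simp, h.symm⟩]
    · rcases cr23 with ⟨h, -⟩ | ⟨h, -⟩
      exacts [⟨u4, by simp, u3, by simp, h.symm⟩, ⟨v4, by simp, u3, by simp, h.symm⟩]
    · rcases cr23 with ⟨-, h⟩ | ⟨-, h⟩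
      exacts [⟨v4, by simp, v3, by simp, h.symm⟩, ⟨u4, by simp, v3, by simp, h.symm⟩]

theorem Fgraph_cliqueFree_of_planar {V : Type*} [Fintype V] (G : SimpleGraph V)
    (hG : IsPlanar G) : (Fgraph G).CliqueFree 4 := by
  exact Fgraph_cliqueFree_of_planar' G hG.1
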